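/- Fix a ∈ ℝ, a ≠ 0, and let G be the matrix group of all g(x₁,x₂,x₃,x₄) as above, with H₁ = { g(0,0,k,0) : k ∈ ℝ }. Then the core of H₁ in G is trivial: the only normal subgroup of G contained in H₁ is the trivial subgroup. -/
import Mathlib


noncomputable def g (a x₁ x₂ x₃ x₄ : ℝ) : Matrix (Fin 4) (Fin 4) ℝ :=
  !![Real.exp (a * x₄), 0, 0, x₁;
     0, Real.exp x₄, x₄ * Real.exp x₄, x₂;
     0, 0, Real.exp x₄, x₃;
     0, 0, 0, 1]

lemma g_zero_one (a : ℝ) : g a 0 0 0 0 = 1 := by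
  ext i j
  fin_cases i <;> fin_cases j <;>
    simp [g, Matrix.one_apply, Matrix.vecHead, Matrix.vecTail]

theorem core_H1_trivial (a : ℝ) (ha : a ≠ 0) :
    ∀ S : Set (Matrix (Fin 4) (Fin 4) ℝ),
      S ⊆ {M | ∃ k : ℝ, M = g a 0 0 k 0} →
      (1 : Matrix (Fin 4) (Fin 4) ℝ) ∈ S →
      (∀ x ∈ S, ∀ y ∈ S, x * y ∈ S) →
      (∀ x ∈ S, x⁻¹ ∈ S) →
      (∀ P ∈ {M | ∃ x₁ x₂ x₃ x₄ : ℝ, M = g a x₁ x₂ x₃ x₄}, ∀ s ∈ S, P * s * P⁻¹ ∈ S) →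
      S = {1} := by
  intro S hSsub hone hmul hinv hconj
  apply Set.eq_of_subset_of_subset
  · intro x hx
    obtain ⟨k, rfl⟩ := hSsub hx
    have hP : g a 0 0 0 1 ∈ {M | ∃ x₁ x₂ x₃ x₄ : ℝ, M = g a x₁ x₂ x₃ x₄} :=
      ⟨0, 0, 0, 1, rfl⟩
    obtain ⟨m, hm⟩ := hSsub (hconj _ hP _ hx)
    have hdet : IsUnit (g a 0 0 0 1).det := by
      rw [isUnit_iff_ne_zero]
      simp [g, Matrix.det_succ_row_zero, Fin.sum_univ_succ, Real.exp_ne_zero]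
    have h2 : g a 0 0 0 1 * g a 0 0 k 0 = g a 0 0 m 0 * g a 0 0 0 1 := by
      have := congrArg (· * g a 0 0 0 1) hm
      simpa [Matrix.mul_assoc, Matrix.nonsing_inv_mul _ hdet] using this
    have h13 := congrFun (congrFun h2 1) 3
    simp [g, Matrix.mul_apply, Fin.sum_univ_four] at h13
    simp [h13, g_zero_one]
  · intro x hx
    simp only [Set.mem_singleton_iff] at hx
    rw [hx]; exact hone
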